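/- Let X be an infinite-dimensional Banach space and A ⊆ L(X) a closed subalgebra containing all finite-rank operators. Then for every hyper-commutator M of A (an element M ∈ A ⊗^γ A with (a⊗1)M = M(1⊗a) for all a ∈ A), the image of M under the composition A ⊗^γ A → L(X) ⊗^γ L(X) → L(X ⊗^γ X) of the canonical maps is zero. In particular, if A is unital with unit the identity operator, A has no diagonal, so A is not contractible via a diagonal whose image under Υ is nonzero. -/

import Mathlib

open scoped Topology
open Filter
set_option maxHeartbeats 1000000

/-- let `X` be an infinite-dimensional Banach space and
`𝒜 ⊆ L(X)` a closed subalgebra containing all finite-rank operators. For every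
hyper-commutator `M = Σ aₙ ⊗ bₙ ∈ 𝒜 ⊗^γ 𝒜` (i.e. `(c⊗1)M = M(1⊗c)` for all
`c ∈ 𝒜`, equality in `𝒜 ⊗^γ 𝒜` being tested against all bounded bilinear
functionals on `𝒜 × 𝒜`, which separate its points), the image of `M` under
the canonical map `𝒜 ⊗^γ 𝒜 → L(X) ⊗^γ L(X) → L(X ⊗^γ X)` vanishes, i.e.
`Σ φ(aₙ x, bₙ y) = 0` for all `x, y ∈ X` and all bounded bilinear functionals
`φ` on `X × X` (such functionals separate the points of `X ⊗^γ X`). -/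
theorem hypercommutator_of_subalgebra_vanishes
    (X : Type) [NormedAddCommGroup X] [NormedSpace ℂ X] [CompleteSpace X]
    (hinf : ¬ FiniteDimensional ℂ X)
    (𝒜 : NonUnitalSubalgebra ℂ (X →L[ℂ] X))
    (hclosed : IsClosed (𝒜 : Set (X →L[ℂ] X)))
    (hfr : ∀ T : X →L[ℂ] X, FiniteDimensional ℂ (LinearMap.range (T : X →ₗ[ℂ] X)) → T ∈ 𝒜)
    (a b : ℕ → X →L[ℂ] X) (ha : ∀ n, a n ∈ 𝒜) (hb : ∀ n, b n ∈ 𝒜)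
    (hsum : Summable fun n => ‖a n‖ * ‖b n‖)
    (hcomm : ∀ Φ : 𝒜 →L[ℂ] 𝒜 →L[ℂ] ℂ,
      ∀ c : X →L[ℂ] X, ∀ hc : c ∈ 𝒜,
        (∑' n, Φ ⟨c * a n, mul_mem hc (ha n)⟩ ⟨b n, hb n⟩) =
          ∑' n, Φ ⟨a n, ha n⟩ ⟨b n * c, mul_mem (hb n) hc⟩) :
    ∀ φ : X →L[ℂ] X →L[ℂ] ℂ, ∀ x y,
      (∑' n, φ (a n x) (b n y)) = 0 := by
  intro φ x y
  by_contra hne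
  set lam : ℂ := ∑' n, φ (a n x) (b n y) with hlam
  apply hinf
  -- The key identity from the hyper-commutator property with rank-one operators.
  have key : ∀ (f : X →L[ℂ] ℂ) (u y' : X),
      (∑' n, f (a n x) * φ u (b n y')) = f y' * ∑' n, φ (a n x) (b n u) := by
    intro f u y'
    set c : X →L[ℂ] X := f.smulRight u with hc_def
    have hc : c ∈ 𝒜 := by
      apply hfr
      have h : LinearMap.range (c : X →ₗ[ℂ] X) ≤ Submodule.span ℂ {u} := by
        rintro z ⟨w, rfl⟩
        exact Submodule.smul_mem _ _ (Submodule.mem_span_singleton_self u)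
      exact Submodule.finiteDimensional_of_le h
    have hΦbound : ∀ S T : 𝒜, ‖φ (S.1 x) (T.1 y')‖ ≤ (‖φ‖ * ‖x‖ * ‖y'‖) * ‖S‖ * ‖T‖ := by
      intro S T
      calc ‖φ (S.1 x) (T.1 y')‖ ≤ ‖φ (S.1 x)‖ * ‖T.1 y'‖ := (φ _).le_opNorm _
      _ ≤ (‖φ‖ * ‖S.1 x‖) * (‖T.1‖ * ‖y'‖) :=
          mul_le_mul (φ.le_opNorm _) (T.1.le_opNorm _) (norm_nonneg _) (by positivity)
      _ ≤ (‖φ‖ * (‖S.1‖ * ‖x‖)) * (‖T.1‖ * ‖y'‖) := by gcongr; exact S.1.le_opNorm _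
      _ = (‖φ‖ * ‖x‖ * ‖y'‖) * ‖S.1‖ * ‖T.1‖ := by ring
    let Φ : 𝒜 →L[ℂ] 𝒜 →L[ℂ] ℂ :=
      LinearMap.mkContinuous₂
        (LinearMap.mk₂ ℂ (fun S T : 𝒜 => φ (S.1 x) (T.1 y'))
          (by intro S S' T; simp) (by intro c S T; simp)
          (by intro S T T'; simp) (by intro c S T; simp))
        (‖φ‖ * ‖x‖ * ‖y'‖) hΦbound
    have hΦ := hcomm Φ c hc
    have hΦapp : ∀ (S T : X →L[ℂ] X) (hS : S ∈ 𝒜) (hT : T ∈ 𝒜),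
        Φ ⟨S, hS⟩ ⟨T, hT⟩ = φ (S x) (T y') := fun _ _ _ _ => rfl
    rw [tsum_congr (fun n => hΦapp _ _ _ _), tsum_congr (fun n => hΦapp _ _ _ _)] at hΦ
    have hL : ∀ n, φ ((c * a n) x) (b n y') = f (a n x) * φ u (b n y') := by
      intro n
      have : (c * a n) x = f (a n x) • u := rfl
      rw [this, map_smul]
      simp [smul_eq_mul]
    have hR : ∀ n, φ (a n x) ((b n * c) y') = f y' * φ (a n x) (b n u) := by
      intro n
      have : (b n * c) y' = f y' • (b n u) := by
        simp [hc_def, ContinuousLinearMap.mul_apply, map_smul]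
      rw [this, map_smul]
      simp [smul_eq_mul]
    rw [tsum_congr hL, tsum_congr hR, tsum_mul_left] at hΦ
    exact hΦ
  -- `g n` is the rank-one operator `z ↦ φ y (b n z) • (a n x)`
  set g : ℕ → X →L[ℂ] X := fun n => ((φ y).comp (b n)).smulRight (a n x) with hg_def
  have hgnorm : ∀ n, ‖g n‖ ≤ (‖φ‖ * ‖y‖ * ‖x‖) * (‖a n‖ * ‖b n‖) := by
    intro n
    rw [hg_def]
    calc ‖((φ y).comp (b n)).smulRight (a n x)‖ = ‖(φ y).comp (b n)‖ * ‖a n x‖ :=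
        ContinuousLinearMap.norm_smulRight_apply _ _
    _ ≤ (‖φ y‖ * ‖b n‖) * (‖a n‖ * ‖x‖) :=
        mul_le_mul ((φ y).opNorm_comp_le _) ((a n).le_opNorm _) (norm_nonneg _) (by positivity)
    _ ≤ ((‖φ‖ * ‖y‖) * ‖b n‖) * (‖a n‖ * ‖x‖) := by gcongr; exact φ.le_opNorm _
    _ = (‖φ‖ * ‖y‖ * ‖x‖) * (‖a n‖ * ‖b n‖) := by ring
  have hgsummable : Summable g :=
    Summable.of_norm_bounded (hsum.mul_left _) hgnorm
  have happ : ∀ y', (∑' n, g n) y' = ∑' n, g n y' := by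
    intro y'
    exact ((ContinuousLinearMap.apply ℂ X y').map_tsum hgsummable)
  have hGsum : ∀ y', Summable (fun n => g n y') := by
    intro y'
    exact hgsummable.map ((ContinuousLinearMap.apply ℂ X y').toLinearMap.toAddMonoidHom) (ContinuousLinearMap.apply ℂ X y').continuous
  -- `∑' g n = lam • 1`
  have hG : (∑' n, g n) = lam • (1 : X →L[ℂ] X) := by
    ext y'
    rw [happ y']
    rw [NormedSpace.eq_iff_forall_dual_eq ℂ]
    intro f
    rw [f.map_tsum (hGsum y')]
    have : ∀ n, f (g n y') = f (a n x) * φ y (b n y') := by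
      intro n
      have : g n y' = φ y (b n y') • (a n x) := rfl
      rw [this, map_smul]
      simp [smul_eq_mul, mul_comm]
    rw [tsum_congr this, key f y y']
    simp [smul_eq_mul, mul_comm]
    exact Or.inl rfl
  -- therefore `1` is the norm limit of finite-rank operators
  have hgsummable' : Summable (fun n => lam⁻¹ • g n) := hgsummable.const_smul _
  have hone : (1 : X →L[ℂ] X) = ∑' n, lam⁻¹ • g n := by
    rw [Summable.tsum_const_smul _ hgsummable, hG, smul_smul, inv_mul_cancel₀ hne, one_smul]
  have hnormsummable : Summable (fun n => ‖lam⁻¹ • g n‖) := by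
    refine Summable.of_nonneg_of_le (fun n => norm_nonneg _) (fun n => ?_)
      ((hsum.mul_left (‖φ‖ * ‖y‖ * ‖x‖)).mul_left ‖lam⁻¹‖)
    exact (norm_smul_le _ _).trans (mul_le_mul_of_nonneg_left (hgnorm n) (norm_nonneg _))
  obtain ⟨N, hN⟩ : ∃ N, (∑' n, ‖lam⁻¹ • g (n + N)‖) < 1 := by
    have := tendsto_sum_nat_add (fun n => ‖lam⁻¹ • g n‖)
    have h1 : ∀ᶠ N in atTop, (∑' n, ‖lam⁻¹ • g (n + N)‖) < 1 := by
      exact this.eventually (gt_mem_nhds one_pos)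
    exact h1.exists
  set T : X →L[ℂ] X := ∑ n ∈ Finset.range N, lam⁻¹ • g n with hT_def
  set R : X →L[ℂ] X := ∑' n, lam⁻¹ • g (n + N) with hR_def
  have hTR : T + R = 1 := by
    rw [hT_def, hR_def, hone]
    exact Summable.sum_add_tsum_nat_add N hgsummable'
  have hRnorm : ‖R‖ < 1 := lt_of_le_of_lt (norm_tsum_le_tsum_norm
    (hnormsummable.comp_injective (add_left_injective N))) hN
  -- T = 1 - R is invertible, hence surjective
  have hTsurj : Function.Surjective T := by
    have hT1 : T = 1 - R := eq_sub_of_add_eq hTR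
    intro z
    refine ⟨((Units.oneSub R hRnorm)⁻¹ : (X →L[ℂ] X)ˣ).1 z, ?_⟩
    have := (Units.oneSub R hRnorm).mul_inv
    rw [Units.val_oneSub] at this
    calc T (((Units.oneSub R hRnorm)⁻¹ : (X →L[ℂ] X)ˣ).1 z)
        = ((1 - R) * ((Units.oneSub R hRnorm)⁻¹ : (X →L[ℂ] X)ˣ).1) z := by
          rw [hT1]; rfl
    _ = z := by rw [this]; rfl
  -- range of T is finite dimensional
  have hrange : LinearMap.range (T : X →ₗ[ℂ] X) ≤
      Submodule.span ℂ ((fun n => a n x) '' ↑(Finset.range N)) := by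
    rintro z ⟨w, rfl⟩
    have : T w = ∑ n ∈ Finset.range N, (lam⁻¹ * φ y (b n w)) • (a n x) := by
      rw [hT_def]
      simp [ContinuousLinearMap.sum_apply, hg_def, smul_smul]
    change T w ∈ _
    rw [this]
    refine Submodule.sum_mem _ fun n hn => Submodule.smul_mem _ _ ?_
    exact Submodule.subset_span ⟨n, by simpa using hn, rfl⟩
  have hspanfd : FiniteDimensional ℂ
      (Submodule.span ℂ ((fun n => a n x) '' ↑(Finset.range N))) :=
    FiniteDimensional.span_of_finite ℂ ((Finset.range N).finite_toSet.image _)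
  have htop : (⊤ : Submodule ℂ X) ≤
      Submodule.span ℂ ((fun n => a n x) '' ↑(Finset.range N)) := by
    rw [← LinearMap.range_eq_top.mpr hTsurj]
    exact hrange
  have hspan : Submodule.span ℂ ((fun n => a n x) '' ↑(Finset.range N)) = ⊤ :=
    top_unique htop
  exact Module.Finite.equiv (LinearEquiv.ofTop _ hspan)
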